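/- Let N ≥ 2, let F₁,…,F_N be real random variables on a common probability space such that for each n the law of F_n is Gaussian with mean m_n and standard deviation σ_n > 0, and let τ ∈ ℝ. Then E[max(max_{n∈[N]} F_n − τ, 0)] ≤ max( max_{n∈[N]} (m_n − τ + σ_n·√(2·log N)), 0 ) + (max_{n∈[N]} σ_n) / (2·√(2π)·log N). -/

import Mathlib

open MeasureTheory ProbabilityTheory

section helpers
open Real Set
open scoped NNReal ENNReal


lemma g0_integrable' {r : ℝ} (hr : 0 < r) :
    Integrable (fun x : ℝ => max x 0 * Real.exp (-(r * max x 0))) := by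
  rw [← integrableOn_univ, ← Set.Iic_union_Ioi (a := (0:ℝ)), integrableOn_union]
  constructor
  · refine (integrableOn_zero).congr_fun (fun x hx => ?_) measurableSet_Iic
    rw [max_eq_right (mem_Iic.mp hx)]
    simp
  · refine (integrableOn_rpow_mul_exp_neg_mul_rpow (s := 1) (p := 1) (by norm_num) one_pos
      hr).congr_fun (fun x hx => ?_) measurableSet_Ioi
    have hx' : (0:ℝ) < x := hx
    simp only [Real.rpow_one]; rw [max_eq_left hx'.le, neg_mul]

lemma g0_integral' {r : ℝ} (hr : 0 < r) :
    (∫ x : ℝ, max x 0 * Real.exp (-(r * max x 0))) = 1 / r ^ 2 := by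
  rw [← setIntegral_eq_integral_of_forall_compl_eq_zero (s := Set.Ioi (0:ℝ)) (fun x hx => by
      rw [max_eq_right (not_lt.mp (fun h => hx h)), zero_mul])]
  calc (∫ x in Set.Ioi (0:ℝ), max x 0 * Real.exp (-(r * max x 0)))
      = ∫ x in Set.Ioi (0:ℝ), x ^ ((2:ℝ) - 1) * Real.exp (-(r * x)) := by
        refine setIntegral_congr_fun measurableSet_Ioi (fun x hx => ?_)
        have hx' : (0:ℝ) < x := hx
        rw [max_eq_left hx'.le]
        norm_num
    _ = (1 / r) ^ (2:ℝ) * Real.Gamma 2 := integral_rpow_mul_exp_neg_mul_Ioi two_pos hr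
    _ = 1 / r ^ 2 := by
        have h2 : Real.Gamma 2 = 1 := by
          rw [show (2:ℝ) = 1 + 1 by norm_num, Real.Gamma_add_one one_ne_zero, Real.Gamma_one,
            mul_one]
        rw [h2, mul_one, show (2:ℝ) = ((2:ℕ):ℝ) by norm_num, Real.rpow_natCast, div_pow, one_pow]

lemma key' {m σ β c : ℝ} (hσ : 0 < σ) (hβ : 0 < β) (hc : m + σ * β ≤ c) :
    Integrable (fun x => max (x - c) 0) (gaussianReal m ⟨σ ^ 2, sq_nonneg σ⟩) ∧
    (∫ x, max (x - c) 0 ∂(gaussianReal m ⟨σ ^ 2, sq_nonneg σ⟩))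
      ≤ σ * Real.exp (-β ^ 2 / 2) / (Real.sqrt (2 * Real.pi) * β ^ 2) := by
  set v : ℝ≥0 := ⟨σ ^ 2, sq_nonneg σ⟩ with hvdef
  have hvr : (v : ℝ) = σ ^ 2 := rfl
  have hv0 : v ≠ 0 := by
    intro h
    have : (v : ℝ) = 0 := by rw [h]; rfl
    rw [hvr] at this
    exact (pow_pos hσ 2).ne' this
  have hden : gaussianReal m v = volume.withDensity
      (fun x => ((gaussianPDFReal m v x).toNNReal : ℝ≥0∞)) := by
    rw [gaussianReal_of_var_ne_zero m hv0]; rfl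
  have hpdf_meas : Measurable (fun x => (gaussianPDFReal m v x).toNNReal) :=
    (measurable_gaussianPDFReal m v).real_toNNReal
  set r := β / σ with hrdef
  have hr0 : 0 < r := div_pos hβ hσ
  have hσr : σ * r = β := by rw [hrdef, mul_div_assoc', mul_div_cancel_left₀ _ hσ.ne']
  set K := (σ * Real.sqrt (2 * Real.pi))⁻¹ * Real.exp (-β ^ 2 / 2) with hKdef
  have hK0 : 0 ≤ K := by positivity
  have hsmul : ∀ x : ℝ, (gaussianPDFReal m v x).toNNReal • max (x - c) 0
      = gaussianPDFReal m v x * max (x - c) 0 := fun x => by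
    rw [NNReal.smul_def, Real.coe_toNNReal _ (gaussianPDFReal_nonneg m v x), smul_eq_mul]
  have hbound : ∀ x : ℝ, gaussianPDFReal m v x * max (x - c) 0
      ≤ K * (max (x - c) 0 * Real.exp (-(r * max (x - c) 0))) := by
    intro x
    rcases le_or_gt x c with h | h
    · rw [max_eq_right (by linarith)]; simp
    · have hxc : 0 < x - c := by linarith
      rw [max_eq_left hxc.le, gaussianPDFReal]
      have hsq : Real.sqrt (2 * Real.pi * v) = σ * Real.sqrt (2 * Real.pi) := by
        rw [hvr, mul_comm (2 * Real.pi) (σ ^ 2), Real.sqrt_mul (sq_nonneg σ),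
          Real.sqrt_sq hσ.le]
      rw [hsq]
      have hexp : Real.exp (-(x - m) ^ 2 / (2 * (v : ℝ)))
          ≤ Real.exp (-β ^ 2 / 2) * Real.exp (-(r * (x - c))) := by
        rw [← Real.exp_add, Real.exp_le_exp, hvr]
        rw [div_le_iff₀ (by positivity : (0:ℝ) < 2 * σ ^ 2)]
        have hxm : (x - c) + σ * β ≤ x - m := by linarith
        have h2 : ((x - c) + σ * β) ^ 2 ≤ (x - m) ^ 2 := by
          nlinarith [hxc, mul_pos hσ hβ]
        have h4 : σ ^ 2 * r = σ * β := by rw [← hσr]; ring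
        nlinarith [h2, h4, sq_nonneg (x - c)]
      calc (σ * Real.sqrt (2 * Real.pi))⁻¹ * Real.exp (-(x - m) ^ 2 / (2 * (v:ℝ))) * (x - c)
          ≤ (σ * Real.sqrt (2 * Real.pi))⁻¹
              * (Real.exp (-β ^ 2 / 2) * Real.exp (-(r * (x - c)))) * (x - c) := by
            have hpos : (0:ℝ) < (σ * Real.sqrt (2 * Real.pi))⁻¹ := by positivity
            have := mul_le_mul_of_nonneg_left hexp hpos.le
            exact mul_le_mul_of_nonneg_right this hxc.le
        _ = K * ((x - c) * Real.exp (-(r * (x - c)))) := by rw [hKdef]; ring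
  have hDom : Integrable (fun x : ℝ =>
      K * (max (x - c) 0 * Real.exp (-(r * max (x - c) 0)))) volume := by
    have := ((g0_integrable' hr0).comp_sub_right c).const_mul K
    simpa using this
  have hmeasf : Measurable fun x : ℝ => gaussianPDFReal m v x * max (x - c) 0 :=
    (measurable_gaussianPDFReal m v).mul ((measurable_id.sub_const c).max measurable_const)
  have hInt2 : Integrable (fun x : ℝ => gaussianPDFReal m v x * max (x - c) 0) volume := by
    refine hDom.mono' hmeasf.aestronglyMeasurable ?_
    filter_upwards with x
    rw [Real.norm_eq_abs, abs_of_nonneg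
      (mul_nonneg (gaussianPDFReal_nonneg m v x) (le_max_right _ _))]
    exact hbound x
  constructor
  · rw [hden, integrable_withDensity_iff_integrable_smul hpdf_meas]
    simpa only [hsmul] using hInt2
  · rw [hden, integral_withDensity_eq_integral_smul hpdf_meas]
    simp_rw [hsmul]
    have h1 : (∫ x, gaussianPDFReal m v x * max (x - c) 0)
        ≤ ∫ x, K * (max (x - c) 0 * Real.exp (-(r * max (x - c) 0))) := by
      refine integral_mono_of_nonneg ?_ hDom ?_
      · filter_upwards with x
        exact mul_nonneg (gaussianPDFReal_nonneg m v x) (le_max_right _ _)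
      · filter_upwards with x; exact hbound x
    refine h1.trans ?_
    rw [integral_const_mul]
    have h2 : (∫ x : ℝ, max (x - c) 0 * Real.exp (-(r * max (x - c) 0)))
        = 1 / r ^ 2 := by
      rw [← g0_integral' hr0]
      exact integral_sub_right_eq_self (fun y : ℝ => max y 0 * Real.exp (-(r * max y 0))) c
    rw [h2, hKdef, hrdef]
    apply le_of_eq
    have hσ' : σ ≠ 0 := hσ.ne'
    have hβ' : β ≠ 0 := hβ.ne'
    have hπ : Real.sqrt (2 * Real.pi) ≠ 0 := by positivity
    field_simp

end helpers

/-- Upper bound on the multivariate expected improvement (Lemma `bound_nei`): only the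
one-dimensional Gaussian marginals are used. -/
theorem stmt7 {Ω : Type*} [MeasurableSpace Ω] (P : Measure Ω) [IsProbabilityMeasure P]
    {N : ℕ} (hN : 2 ≤ N) (F : Fin N → Ω → ℝ) (m σ : Fin N → ℝ) (hσ : ∀ n, 0 < σ n)
    (hF : ∀ n, Measure.map (F n) P = gaussianReal (m n) ⟨(σ n) ^ 2, sq_nonneg _⟩)
    (τ : ℝ) :
    (∫ ω, max ((Finset.univ.sup' (Finset.univ_nonempty_iff.mpr ⟨⟨0, by omega⟩⟩)
          fun n => F n ω) - τ) 0 ∂P)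
      ≤ max (Finset.univ.sup' (Finset.univ_nonempty_iff.mpr ⟨⟨0, by omega⟩⟩)
            fun n => m n - τ + σ n * Real.sqrt (2 * Real.log N)) 0
        + (Finset.univ.sup' (Finset.univ_nonempty_iff.mpr ⟨⟨0, by omega⟩⟩) σ)
          / (2 * Real.sqrt (2 * Real.pi) * Real.log N) := by
  have hne : (Finset.univ : Finset (Fin N)).Nonempty :=
    Finset.univ_nonempty_iff.mpr ⟨⟨0, by omega⟩⟩
  have hN1 : (1:ℝ) < (N:ℝ) := by exact_mod_cast Nat.lt_of_lt_of_le one_lt_two hN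
  have hN0 : (0:ℝ) < (N:ℝ) := by linarith
  have hlog : 0 < Real.log N := Real.log_pos hN1
  set β : ℝ := Real.sqrt (2 * Real.log N) with hβdef
  have hβ : 0 < β := Real.sqrt_pos.mpr (by positivity)
  have hβ2 : β ^ 2 = 2 * Real.log N := Real.sq_sqrt (by positivity)
  set a : ℝ := Finset.univ.sup' hne (fun n => m n - τ + σ n * β) with hadef
  set c : ℝ := τ + a with hcdef
  set smax : ℝ := Finset.univ.sup' hne σ with hsdef
  have hsmax : 0 < smax := lt_of_lt_of_le (hσ ⟨0, by omega⟩)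
    (Finset.le_sup' σ (Finset.mem_univ _))
  have hcn : ∀ n, m n + σ n * β ≤ c := by
    intro n
    have h : m n - τ + σ n * β ≤ a :=
      Finset.le_sup' (fun n => m n - τ + σ n * β) (Finset.mem_univ n)
    rw [hcdef]; linarith
  have hkey := fun n => key' (hσ n) hβ (hcn n)
  have hFm : ∀ n, AEMeasurable (F n) P := fun n =>
    aemeasurable_of_map_neZero (by rw [hF n]; exact ⟨@IsProbabilityMeasure.ne_zero _ _ _ (instIsProbabilityMeasureGaussianReal _ _)⟩)
  have hmeas : ∀ μ : Measure ℝ, AEStronglyMeasurable (fun x : ℝ => max (x - c) 0) μ :=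
    fun μ => ((continuous_id.sub continuous_const).max continuous_const).aestronglyMeasurable
  have hint : ∀ n, Integrable (fun ω => max (F n ω - c) 0) P := by
    intro n
    have := (integrable_map_measure (hmeas _) (hFm n)).mp
      (by rw [hF n]; exact (hkey n).1)
    exact this
  have hmap : ∀ n, (∫ ω, max (F n ω - c) 0 ∂P)
      = ∫ x, max (x - c) 0 ∂(gaussianReal (m n) ⟨(σ n) ^ 2, sq_nonneg _⟩) := by
    intro n
    rw [← hF n, integral_map (hFm n) (hmeas _)]
  have hpt : ∀ ω, max ((Finset.univ.sup' hne fun n => F n ω) - τ) 0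
      ≤ max a 0 + ∑ n, max (F n ω - c) 0 := by
    intro ω
    have hsum : (0:ℝ) ≤ ∑ n, max (F n ω - c) 0 :=
      Finset.sum_nonneg fun n _ => le_max_right _ _
    apply max_le
    · obtain ⟨k, -, hk⟩ := Finset.exists_mem_eq_sup' hne (fun n => F n ω)
      rw [hk]
      have h1 : F k ω - c ≤ max (F k ω - c) 0 := le_max_left _ _
      have h2 : max (F k ω - c) 0 ≤ ∑ n, max (F n ω - c) 0 :=
        Finset.single_le_sum (f := fun n => max (F n ω - c) 0)
          (fun n _ => le_max_right _ _) (Finset.mem_univ k)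
      have h3 : a ≤ max a 0 := le_max_left _ _
      rw [hcdef] at h1
      linarith
    · exact add_nonneg (le_max_right _ _) hsum
  show (∫ ω, max ((Finset.univ.sup' hne fun n => F n ω) - τ) 0 ∂P)
      ≤ max a 0 + smax / (2 * Real.sqrt (2 * Real.pi) * Real.log N)
  have hRHSint : Integrable (fun ω => max a 0 + ∑ n, max (F n ω - c) 0) P :=
    (integrable_const _).add (integrable_finset_sum _ fun n _ => hint n)
  calc (∫ ω, max ((Finset.univ.sup' hne fun n => F n ω) - τ) 0 ∂P)
      ≤ ∫ ω, (max a 0 + ∑ n, max (F n ω - c) 0) ∂P := by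
        refine integral_mono_of_nonneg ?_ hRHSint ?_
        · filter_upwards with ω; exact le_max_right _ _
        · filter_upwards with ω; exact hpt ω
    _ = max a 0 + ∑ n, ∫ ω, max (F n ω - c) 0 ∂P := by
        rw [integral_add (integrable_const _) (integrable_finset_sum _ fun n _ => hint n),
          integral_const, integral_finset_sum _ fun n _ => hint n]
        simp
    _ ≤ max a 0 + ∑ n : Fin N,
          smax * Real.exp (-β ^ 2 / 2) / (Real.sqrt (2 * Real.pi) * β ^ 2) := by
        gcongr with n
        refine (by rw [hmap n]; exact (hkey n).2 :
          (∫ ω, max (F n ω - c) 0 ∂P)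
            ≤ σ n * Real.exp (-β ^ 2 / 2) / (Real.sqrt (2 * Real.pi) * β ^ 2)).trans ?_
        gcongr
        exact Finset.le_sup' σ (Finset.mem_univ n)
    _ = max a 0 + smax / (2 * Real.sqrt (2 * Real.pi) * Real.log N) := by
        rw [Finset.sum_const, Finset.card_univ, Fintype.card_fin]
        have hexp : Real.exp (-β ^ 2 / 2) = (N:ℝ)⁻¹ := by
          rw [hβ2, show -(2 * Real.log N) / 2 = -Real.log N by ring, Real.exp_neg,
            Real.exp_log hN0]
        rw [hexp, hβ2, nsmul_eq_mul]
        congr 1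
        have h1 : Real.sqrt (2 * Real.pi) ≠ 0 := by positivity
        field_simp
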